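/- arXiv:2401.00982 — 2 statements merged into one kernel-verified Lean document; each statement's English description precedes it below -/
import Mathlib

section
/- If there exists at least one integer M ≡ r (mod t) with p(M) odd, and the set {M ≡ r (mod t) : p(M) odd} is finite, then one may derive a contradiction; i.e., if the set of M ≡ r (mod t) with p(M) odd is nonempty then it is infinite — verify the special case t = 1: the set {n : p(n) odd} is infinite. -/
/-- The partition function: the number of partitions of `n`. -/
def partitionFn (n : ℕ) : ℕ := Fintype.card (Nat.Partition n)

open Finset

namespace SubbaraoAux

/-- distinct partitions of `n` as finsets of positive integers -/
def Dfin (n : ℕ) : Finset (Finset ℕ) :=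
  ((Finset.range (n+1)).powerset).filter (fun s => 0 ∉ s ∧ s.sum id = n)

lemma mem_Dfin {n : ℕ} {s : Finset ℕ} : s ∈ Dfin n ↔ 0 ∉ s ∧ s.sum id = n := by
  constructor
  · intro h
    exact (Finset.mem_filter.mp h).2
  · rintro ⟨h0, hsum⟩
    refine Finset.mem_filter.mpr ⟨Finset.mem_powerset.mpr ?_, h0, hsum⟩
    intro x hx
    have : x ≤ s.sum id := Finset.single_le_sum (f := id) (fun i _ => Nat.zero_le i) hx
    exact Finset.mem_range.mpr (by omega)

/-- ordinary partitions of `n` as multisets -/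
def Pfin (n : ℕ) : Finset (Multiset ℕ) :=
  Finset.univ.image (fun P : Nat.Partition n => P.parts)

lemma mem_Pfin {n : ℕ} {M : Multiset ℕ} :
    M ∈ Pfin n ↔ (∀ x ∈ M, 0 < x) ∧ M.sum = n := by
  constructor
  · intro h
    obtain ⟨P, -, rfl⟩ := Finset.mem_image.mp h
    exact ⟨fun x hx => P.parts_pos hx, P.parts_sum⟩
  · rintro ⟨hpos, hsum⟩
    exact Finset.mem_image.mpr ⟨⟨M, fun h => hpos _ h, hsum⟩, Finset.mem_univ _, rfl⟩

lemma card_Pfin {n : ℕ} : (Pfin n).card = Fintype.card (Nat.Partition n) := by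
  rw [Pfin, Finset.card_image_of_injective _ (fun P Q h => Nat.Partition.ext h), Finset.card_univ]

lemma finset_sup_mem {s : Finset ℕ} (hs : s.Nonempty) : s.sup id ∈ s := by
  have := Finset.max'_mem s hs
  rwa [Finset.max'_eq_sup' , Finset.sup'_eq_sup] at this

lemma multiset_sup_mem {M : Multiset ℕ} (hM : M ≠ 0) : M.sup ∈ M := by
  induction M using Multiset.induction_on with
  | empty => simp at hM
  | cons a t ih =>
    rw [Multiset.sup_cons]
    rcases eq_or_ne t 0 with rfl | ht
    · simp
    · rcases le_total a t.sup with h | h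
      · rw [max_eq_right h]
        exact Multiset.mem_cons_of_mem (ih ht)
      · rw [max_eq_left h]
        exact Multiset.mem_cons_self _ _

def Pairs (n : ℕ) : Finset (Finset ℕ × Multiset ℕ) :=
  (Finset.range (n+1)).biUnion (fun k => (Dfin k) ×ˢ (Pfin (n - k)))

lemma mem_Pairs {n : ℕ} {p : Finset ℕ × Multiset ℕ} :
    p ∈ Pairs n ↔ 0 ∉ p.1 ∧ (∀ x ∈ p.2, 0 < x) ∧ p.1.sum id + p.2.sum = n := by
  constructor
  · intro h
    obtain ⟨k, hk, hp⟩ := Finset.mem_biUnion.mp h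
    obtain ⟨h1, h2⟩ := Finset.mem_product.mp hp
    obtain ⟨h0, hs⟩ := mem_Dfin.mp h1
    obtain ⟨hpos, hM⟩ := mem_Pfin.mp h2
    have hkn : k ≤ n := by
      have := Finset.mem_range.mp hk; omega
    exact ⟨h0, hpos, by omega⟩
  · rintro ⟨h0, hpos, hsum⟩
    refine Finset.mem_biUnion.mpr ⟨p.1.sum id, Finset.mem_range.mpr (by omega), ?_⟩
    refine Finset.mem_product.mpr ⟨mem_Dfin.mpr ⟨h0, rfl⟩, mem_Pfin.mpr ⟨hpos, by omega⟩⟩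

lemma card_Pairs {n : ℕ} :
    (Pairs n).card
      = ∑ k ∈ Finset.range (n+1), (Dfin k).card * Fintype.card (Nat.Partition (n - k)) := by
  rw [Pairs, Finset.card_biUnion]
  · refine Finset.sum_congr rfl fun k _ => ?_
    rw [Finset.card_product]
    congr 1
    rw [Pfin, Finset.card_image_of_injective _ (fun P Q h => Nat.Partition.ext h), Finset.card_univ]
  · intro x hx y hy hxy
    simp only [Finset.disjoint_left]
    intro p hp hq
    obtain ⟨h1, -⟩ := Finset.mem_product.mp hp
    obtain ⟨h2, -⟩ := Finset.mem_product.mp hq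
    exact hxy ((mem_Dfin.mp h1).2 ▸ (mem_Dfin.mp h2).2 ▸ rfl)



def pairFlip (p : Finset ℕ × Multiset ℕ) : Finset ℕ × Multiset ℕ :=
  if p.1.sup id < p.2.sup then (insert p.2.sup p.1, p.2.erase p.2.sup)
  else (p.1.erase (p.1.sup id), (p.1.sup id) ::ₘ p.2)

lemma pairFlip_spec {n : ℕ} (hn : 1 ≤ n) {p : Finset ℕ × Multiset ℕ} (hp : p ∈ Pairs n) :
    pairFlip p ∈ Pairs n ∧ pairFlip p ≠ p ∧ pairFlip (pairFlip p) = p := by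
  obtain ⟨s, M⟩ := p
  obtain ⟨h0, hpos, hsum⟩ := mem_Pairs.mp hp
  simp only at h0 hpos hsum
  have hsum2 : (∑ x ∈ s, x) + M.sum = n := hsum
  by_cases hab : s.sup id < M.sup
  · -- move b := M.sup from M to s
    have hb1 : 1 ≤ M.sup := by omega
    have hM0 : M ≠ 0 := by rintro rfl; simp at hb1
    have hbM : M.sup ∈ M := multiset_sup_mem hM0
    have hbs : M.sup ∉ s := fun h => absurd (Finset.le_sup (f := id) h) (by simp only [id_eq]; omega)
    have h1 : pairFlip (s, M) = (insert M.sup s, M.erase M.sup) := by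
      simp only [pairFlip, if_pos hab]
    have hbsum : M.sup + (M.erase M.sup).sum = M.sum := by
      rw [← Multiset.sum_cons, Multiset.cons_erase hbM]
    have hsum' : (insert M.sup s).sum id + (M.erase M.sup).sum = n := by
      rw [Finset.sum_insert hbs]
      simp only [id_eq]
      have : (∑ x ∈ s, id x) = ∑ x ∈ s, x := rfl
      omega
    have hmem : (insert M.sup s, M.erase M.sup) ∈ Pairs n := by
      refine mem_Pairs.mpr ⟨?_, ?_, hsum'⟩
      · intro hmem'
        rcases Finset.mem_insert.mp hmem' with h | h
        · omega
        · exact h0 h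
      · exact fun x hx => hpos x (Multiset.mem_of_mem_erase hx)
    have hsup' : (insert M.sup s).sup id = M.sup := by
      rw [Finset.sup_insert]
      simp only [id_eq]
      exact sup_eq_left.mpr (by omega)
    refine ⟨h1 ▸ hmem, ?_, ?_⟩
    · rw [h1]
      intro h
      rw [Prod.mk.injEq] at h
      exact hbs (h.1 ▸ Finset.mem_insert_self M.sup s)
    · rw [h1]
      simp only [pairFlip]
      have hble : (M.erase M.sup).sup ≤ M.sup := Multiset.sup_le.mpr fun x hx =>
        Multiset.le_sup (Multiset.mem_of_mem_erase hx)
      rw [if_neg (by rw [hsup']; omega)]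
      rw [hsup', Finset.erase_insert hbs, Multiset.cons_erase hbM]
  · -- move a := s.sup id from s to M
    have hs0 : s.Nonempty := by
      rcases s.eq_empty_or_nonempty with rfl | h
      · exfalso
        have hb0 : M.sup = 0 := by simp at hab; omega
        have hM0 : M = 0 := by
          rcases eq_or_ne M 0 with h | h
          · exact h
          · obtain ⟨x, hx⟩ := Multiset.exists_mem_of_ne_zero h
            have h1 : x ≤ M.sup := Multiset.le_sup hx
            have h2 := hpos x hx
            omega
        rw [hM0] at hsum2
        simp at hsum2; omega
      · exact h
    have has : s.sup id ∈ s := finset_sup_mem hs0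
    have ha1 : 1 ≤ s.sup id := by
      rcases Nat.eq_zero_or_pos (s.sup id) with h | h
      · exact absurd (h ▸ has) h0
      · exact h
    have h1 : pairFlip (s, M) = (s.erase (s.sup id), (s.sup id) ::ₘ M) := by
      simp only [pairFlip, if_neg hab]
    have herase : (∑ x ∈ s.erase (s.sup id), x) + s.sup id = ∑ x ∈ s, x := by
      have := Finset.sum_erase_add s (fun x => x) has
      simpa using this
    have hsum' : (s.erase (s.sup id)).sum id + ((s.sup id) ::ₘ M).sum = n := by
      rw [Multiset.sum_cons]
      have : (s.erase (s.sup id)).sum id = ∑ x ∈ s.erase (s.sup id), x := rfl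
      omega
    have hmem : (s.erase (s.sup id), (s.sup id) ::ₘ M) ∈ Pairs n := by
      refine mem_Pairs.mpr ⟨fun h => h0 (Finset.mem_of_mem_erase h), ?_, hsum'⟩
      intro x hx
      rcases Multiset.mem_cons.mp hx with rfl | h
      · omega
      · exact hpos x h
    refine ⟨h1 ▸ hmem, ?_, ?_⟩
    · rw [h1]
      intro h
      rw [Prod.mk.injEq] at h
      exact (Finset.erase_eq_self.mp h.1) has
    · rw [h1]
      simp only [pairFlip]
      have hb' : ((s.sup id) ::ₘ M).sup = s.sup id := by
        rw [Multiset.sup_cons]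
        exact sup_eq_left.mpr (by omega)
      have ha' : (s.erase (s.sup id)).sup id < s.sup id := by
        apply Nat.lt_of_le_of_lt (m := s.sup id - 1)
        · apply Finset.sup_le
          intro x hx
          have hx1 := Finset.mem_of_mem_erase hx
          have hx2 := Finset.ne_of_mem_erase hx
          have hx3 := Finset.le_sup (f := id) hx1
          simp only [id_eq] at hx3 ⊢
          omega
        · omega
      rw [hb', if_pos ha']
      rw [Finset.insert_erase has, Multiset.erase_cons_head]

lemma pairs_card_even {n : ℕ} (hn : 1 ≤ n) : ((Pairs n).card : ZMod 2) = 0 := by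
  have h : ∑ _p ∈ Pairs n, (1 : ZMod 2) = 0 := by
    apply Finset.sum_involution (g := fun p _ => pairFlip p)
    · intro a ha; decide
    · intro a ha _; exact (pairFlip_spec hn ha).2.1
    · intro a ha; exact (pairFlip_spec hn ha).1
    · intro a ha; exact (pairFlip_spec hn ha).2.2
  simpa using h

/-- largest part -/
def aF (s : Finset ℕ) : ℕ := s.sup id
/-- smallest part -/
def mF (s : Finset ℕ) : ℕ := WithTop.untopD 0 s.min
/-- largest number below `aF s` missing from `s` -/
def cF (s : Finset ℕ) : ℕ := ((Finset.range (aF s)).filter (fun x => x ∉ s)).sup id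

section basic
variable {s : Finset ℕ}

lemma a_mem (hs : s.Nonempty) : aF s ∈ s := finset_sup_mem hs
lemma le_a {x : ℕ} (hx : x ∈ s) : x ≤ aF s := Finset.le_sup (f := id) hx
lemma a_pos (hs : s.Nonempty) (h0 : 0 ∉ s) : 1 ≤ aF s := by
  rcases Nat.eq_zero_or_pos (aF s) with h | h
  · exact absurd (h ▸ a_mem hs) h0
  · exact h
lemma m_mem (hs : s.Nonempty) : mF s ∈ s := by
  obtain ⟨x, hx⟩ := Finset.min_of_nonempty hs
  have := Finset.mem_of_min hx
  rwa [mF, hx, WithTop.untopD_coe]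
lemma m_le (hs : s.Nonempty) {x : ℕ} (hx : x ∈ s) : mF s ≤ x := by
  obtain ⟨y, hy⟩ := Finset.min_of_nonempty hs
  have := Finset.min_le_of_eq hx hy
  rwa [mF, hy, WithTop.untopD_coe]
lemma m_pos (hs : s.Nonempty) (h0 : 0 ∉ s) : 1 ≤ mF s := by
  rcases Nat.eq_zero_or_pos (mF s) with h | h
  · exact absurd (h ▸ m_mem hs) h0
  · exact h
lemma m_le_a (hs : s.Nonempty) : mF s ≤ aF s := le_a (m_mem hs)

lemma gap_nonempty (hs : s.Nonempty) (h0 : 0 ∉ s) : ((Finset.range (aF s)).filter (fun x => x ∉ s)).Nonempty :=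
  ⟨0, Finset.mem_filter.mpr ⟨Finset.mem_range.mpr (a_pos hs h0), h0⟩⟩
lemma c_not_mem (hs : s.Nonempty) (h0 : 0 ∉ s) : cF s ∉ s := by
  have := finset_sup_mem (gap_nonempty hs h0)
  exact (Finset.mem_filter.mp this).2
lemma c_lt_a (hs : s.Nonempty) (h0 : 0 ∉ s) : cF s < aF s := by
  have := finset_sup_mem (gap_nonempty hs h0)
  exact Finset.mem_range.mp (Finset.mem_filter.mp this).1
lemma run_mem (hs : s.Nonempty) (h0 : 0 ∉ s) {x : ℕ} (hcx : cF s < x) (hxa : x ≤ aF s) : x ∈ s := by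
  rcases Nat.lt_or_ge x (aF s) with h | h
  · by_contra hx
    have : x ∈ (Finset.range (aF s)).filter (fun x => x ∉ s) :=
      Finset.mem_filter.mpr ⟨Finset.mem_range.mpr h, hx⟩
    have h2 : x ≤ cF s := Finset.le_sup (f := id) this
    omega
  · have : x = aF s := le_antisymm hxa h
    exact this ▸ a_mem hs
/-- uniqueness lemmas -/
lemma a_unique {x : ℕ} (hx : x ∈ s) (hub : ∀ y ∈ s, y ≤ x) : aF s = x :=
  le_antisymm (Finset.sup_le fun y hy => hub y hy) (le_a hx)
lemma m_unique {x : ℕ} (hx : x ∈ s) (hlb : ∀ y ∈ s, x ≤ y) : mF s = x :=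
  le_antisymm (m_le ⟨x, hx⟩ hx) (hlb _ (m_mem ⟨x, hx⟩))
lemma c_unique (hs : s.Nonempty) (h0 : 0 ∉ s) {x : ℕ} (hx : x ∉ s) (hxa : x < aF s)
    (hrun : ∀ y, x < y → y < aF s → y ∈ s) : cF s = x := by
  apply le_antisymm
  · by_contra hc
    push_neg at hc
    exact (c_not_mem hs h0) (hrun _ hc (c_lt_a hs h0))
  · exact Finset.le_sup (f := id) (Finset.mem_filter.mpr ⟨Finset.mem_range.mpr hxa, hx⟩)

end basic
def franklin (s : Finset ℕ) : Finset ℕ :=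
  if mF s + cF s ≤ aF s then
    (if aF s + 1 = 2 * mF s then s
     else insert (aF s + 1) ((s.erase (mF s)).erase (aF s + 1 - mF s)))
  else
    (if aF s = 2 * cF s then s
     else insert (aF s - cF s) (insert (cF s) (s.erase (aF s))))

def IsPent (s : Finset ℕ) : Prop :=
  (∃ k, 1 ≤ k ∧ s = Finset.Ico k (2*k)) ∨ (∃ k, 1 ≤ k ∧ s = Finset.Ico (k+1) (2*k+1))

section pentData
variable {k : ℕ} (hk : 1 ≤ k)

lemma ico1_ne (hk : 1 ≤ k) : (Finset.Ico k (2*k)).Nonempty := ⟨k, by simp only [Finset.mem_Ico]; omega⟩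
lemma ico1_h0 (hk : 1 ≤ k) : 0 ∉ Finset.Ico k (2*k) := by simp only [Finset.mem_Ico]; omega
lemma aF_ico1 (hk : 1 ≤ k) : aF (Finset.Ico k (2*k)) = 2*k - 1 := by
  apply a_unique <;> simp [Finset.mem_Ico] <;> omega
lemma mF_ico1 (hk : 1 ≤ k) : mF (Finset.Ico k (2*k)) = k := by
  apply m_unique <;> simp [Finset.mem_Ico] <;> omega
lemma cF_ico1 (hk : 1 ≤ k) : cF (Finset.Ico k (2*k)) = k - 1 := by
  apply c_unique (ico1_ne hk) (ico1_h0 hk) <;>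
    simp [Finset.mem_Ico, aF_ico1 hk] <;> omega

lemma ico2_ne (hk : 1 ≤ k) : (Finset.Ico (k+1) (2*k+1)).Nonempty := ⟨k+1, by simp only [Finset.mem_Ico]; omega⟩
lemma ico2_h0 : 0 ∉ Finset.Ico (k+1) (2*k+1) := by simp only [Finset.mem_Ico]; omega
lemma aF_ico2 (hk : 1 ≤ k) : aF (Finset.Ico (k+1) (2*k+1)) = 2*k := by
  apply a_unique <;> simp [Finset.mem_Ico] <;> omega
lemma mF_ico2 (hk : 1 ≤ k) : mF (Finset.Ico (k+1) (2*k+1)) = k + 1 := by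
  apply m_unique <;> simp [Finset.mem_Ico] <;> omega
lemma cF_ico2 (hk : 1 ≤ k) : cF (Finset.Ico (k+1) (2*k+1)) = k := by
  apply c_unique (ico2_ne hk) ico2_h0 <;>
    simp [Finset.mem_Ico, aF_ico2 hk] <;> omega

end pentData

lemma pent_cond_iff {s : Finset ℕ} (hs : s.Nonempty) (h0 : 0 ∉ s) :
    IsPent s ↔ ((mF s + cF s ≤ aF s ∧ aF s + 1 = 2 * mF s) ∨
      (¬ (mF s + cF s ≤ aF s) ∧ aF s = 2 * cF s)) := by
  constructor
  · rintro (⟨k, hk, rfl⟩ | ⟨k, hk, rfl⟩)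
    · left
      rw [aF_ico1 hk, mF_ico1 hk, cF_ico1 hk]
      omega
    · right
      rw [aF_ico2 hk, mF_ico2 hk, cF_ico2 hk]
      omega
  · have hma := m_le_a hs
    have hca := c_lt_a hs h0
    have hmp := m_pos hs h0
    rintro (⟨hle, heq⟩ | ⟨hgt, heq⟩)
    · left
      refine ⟨mF s, hmp, ?_⟩
      ext x
      simp only [Finset.mem_Ico]
      constructor
      · intro hx
        have h1 := m_le hs hx
        have h2 := le_a hx
        omega
      · rintro ⟨h1, h2⟩
        exact run_mem hs h0 (by omega) (by omega)
    · right
      push_neg at hgt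
      have hc1 : 1 ≤ cF s := by omega
      refine ⟨cF s, hc1, ?_⟩
      ext x
      simp only [Finset.mem_Ico]
      constructor
      · intro hx
        have h1 := m_le hs hx
        have h2 := le_a hx
        omega
      · rintro ⟨h1, h2⟩
        exact run_mem hs h0 (by omega) (by omega)

lemma A_spec {s : Finset ℕ} (hs : s.Nonempty) (h0 : 0 ∉ s)
    (hc : mF s + cF s ≤ aF s) (hne : aF s + 1 ≠ 2 * mF s) :
    (0 ∉ franklin s) ∧ (franklin s).Nonempty ∧ (franklin s).sum id = s.sum id ∧
      franklin s ≠ s ∧ ¬IsPent (franklin s) ∧ franklin (franklin s) = s := by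
  have f1 : mF s ≤ aF s := m_le_a hs
  have f2 : cF s < aF s := c_lt_a hs h0
  have f3 : 1 ≤ mF s := m_pos hs h0
  set a := aF s with ha
  set m := mF s with hm
  set c := cF s with hcdef
  set u := a + 1 - m with hu
  have hu_mem : u ∈ s := run_mem hs h0 (by omega) (by omega)
  have hum : m ≤ u := m_le hs hu_mem
  have hune : u ≠ m := by omega
  have ha2m : 2 * m ≤ a := by omega
  have ha1s : a + 1 ∉ s := fun h => by have := le_a h; omega
  have hm_mem : m ∈ s := m_mem hs
  have hfr : franklin s = insert (a + 1) ((s.erase m).erase u) := by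
    rw [franklin, if_pos hc, if_neg hne]
  set s' := insert (a + 1) ((s.erase m).erase u) with hs'def
  have mem_s' : ∀ x, x ∈ s' ↔ x = a + 1 ∨ (x ∈ s ∧ x ≠ m ∧ x ≠ u) := by
    intro x
    simp only [hs'def, Finset.mem_insert, Finset.mem_erase]
    tauto
  have h0' : 0 ∉ s' := by
    rw [mem_s']
    rintro (h | ⟨h, -, -⟩)
    · omega
    · exact h0 h
  have hs'ne : s'.Nonempty := ⟨a + 1, by rw [mem_s']; left; rfl⟩
  have hu_mem_e : u ∈ s.erase m := Finset.mem_erase.mpr ⟨hune, hu_mem⟩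
  have hsum' : s'.sum id = s.sum id := by
    rw [hs'def, Finset.sum_insert (by rw [Finset.mem_erase, Finset.mem_erase]; tauto)]
    have e1 : ((s.erase m).erase u).sum id + u = (s.erase m).sum id :=
      Finset.sum_erase_add _ id hu_mem_e
    have e2 : (s.erase m).sum id + m = s.sum id := Finset.sum_erase_add _ id hm_mem
    simp only [id_eq] at e1 e2 ⊢
    omega
  have ha' : aF s' = a + 1 := by
    apply a_unique
    · rw [mem_s']; left; rfl
    · intro y hy
      rw [mem_s'] at hy
      rcases hy with rfl | ⟨hy, -, -⟩
      · omega
      · have := le_a hy; omega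
  have hm'lb : m + 1 ≤ mF s' := by
    have := m_mem hs'ne
    rw [mem_s'] at this
    rcases this with h | ⟨h1, h2, -⟩
    · omega
    · have := m_le hs h1; omega
  have hc' : cF s' = u := by
    apply c_unique hs'ne h0'
    · rw [mem_s']
      rintro (h | ⟨-, -, h⟩) <;> omega
    · rw [ha']; omega
    · intro y hy1 hy2
      rw [ha'] at hy2
      rw [mem_s']
      right
      exact ⟨run_mem hs h0 (by omega) (by omega), by omega, by omega⟩
  have hbranch' : ¬(mF s' + cF s' ≤ aF s') := by rw [ha', hc']; omega
  have hne2' : aF s' ≠ 2 * cF s' := by rw [ha', hc']; omega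
  have hfr' : franklin s' = s := by
    rw [franklin, if_neg hbranch', if_neg hne2', ha', hc']
    have e0 : a + 1 - u = m := by omega
    rw [e0]
    have e1 : s'.erase (a + 1) = (s.erase m).erase u := by
      rw [hs'def, Finset.erase_insert (by rw [Finset.mem_erase, Finset.mem_erase]; tauto)]
    rw [e1, Finset.insert_erase hu_mem_e, Finset.insert_erase hm_mem]
  have hne3 : s' ≠ s := by
    intro h
    exact ha1s (h ▸ (mem_s' (a+1)).mpr (Or.inl rfl))
  have hpent' : ¬IsPent s' := by
    rw [pent_cond_iff hs'ne h0']
    rintro (⟨h1, -⟩ | ⟨-, h2⟩)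
    · exact hbranch' h1
    · exact hne2' h2
  rw [hfr]
  exact ⟨h0', hs'ne, hsum', hne3, hpent', hfr'⟩

lemma B_spec {s : Finset ℕ} (hs : s.Nonempty) (h0 : 0 ∉ s)
    (hc : ¬ (mF s + cF s ≤ aF s)) (hne : aF s ≠ 2 * cF s) :
    (0 ∉ franklin s) ∧ (franklin s).Nonempty ∧ (franklin s).sum id = s.sum id ∧
      franklin s ≠ s ∧ ¬IsPent (franklin s) ∧ franklin (franklin s) = s := by
  have f1 : mF s ≤ aF s := m_le_a hs
  have f2 : cF s < aF s := c_lt_a hs h0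
  have f3 : 1 ≤ mF s := m_pos hs h0
  set a := aF s with ha
  set m := mF s with hm
  set c := cF s with hcdef
  have hgt : a < m + c := by omega
  have hc1 : 1 ≤ c := by omega
  have hcp1 : c + 1 ∈ s := run_mem hs h0 (by omega) (by omega)
  have hmc1 : m ≤ c + 1 := m_le hs hcp1
  have ha2c : a < 2 * c := by omega
  have hacm : a - c < m := by omega
  have hacs : a - c ∉ s := fun h => by have := m_le hs h; omega
  have hcs : c ∉ s := c_not_mem hs h0
  have ha_mem : a ∈ s := a_mem hs
  have hfr : franklin s = insert (a - c) (insert c (s.erase a)) := by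
    rw [franklin, if_neg hc, if_neg hne]
  set s' := insert (a - c) (insert c (s.erase a)) with hs'def
  have mem_s' : ∀ x, x ∈ s' ↔ x = a - c ∨ x = c ∨ (x ∈ s ∧ x ≠ a) := by
    intro x
    simp only [hs'def, Finset.mem_insert, Finset.mem_erase]
    tauto
  have h0' : 0 ∉ s' := by
    rw [mem_s']
    rintro (h | h | ⟨h, -⟩)
    · omega
    · omega
    · exact h0 h
  have hs'ne : s'.Nonempty := ⟨a - c, by rw [mem_s']; left; rfl⟩
  have hacn : a - c ∉ insert c (s.erase a) := by
    rw [Finset.mem_insert, Finset.mem_erase]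
    rintro (h | ⟨-, h⟩)
    · omega
    · exact hacs h
  have hcn : c ∉ s.erase a := fun h => hcs (Finset.mem_of_mem_erase h)
  have hsum' : s'.sum id = s.sum id := by
    rw [hs'def, Finset.sum_insert hacn, Finset.sum_insert hcn]
    have e2 : (s.erase a).sum id + a = s.sum id := Finset.sum_erase_add _ id ha_mem
    simp only [id_eq] at e2 ⊢
    omega
  have ha' : aF s' = a - 1 := by
    apply a_unique
    · rcases eq_or_lt_of_le (show c ≤ a - 1 by omega) with h | h
      · rw [mem_s']; right; left; omega
      · rw [mem_s']
        right; right
        exact ⟨run_mem hs h0 (by omega) (by omega), by omega⟩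
    · intro y hy
      rw [mem_s'] at hy
      rcases hy with rfl | rfl | ⟨hy, hyne⟩
      · omega
      · omega
      · have := le_a hy; omega
  have hm' : mF s' = a - c := by
    apply m_unique
    · rw [mem_s']; left; rfl
    · intro y hy
      rw [mem_s'] at hy
      rcases hy with rfl | rfl | ⟨hy, -⟩
      · omega
      · omega
      · have := m_le hs hy; omega
  have hc'lt : cF s' < c := by
    have hcs' := c_not_mem hs'ne h0'
    have hca' := c_lt_a hs'ne h0'
    rw [ha'] at hca'
    by_contra hcon
    push_neg at hcon
    rcases eq_or_lt_of_le hcon with h | h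
    · exact hcs' ((mem_s' (cF s')).mpr (Or.inr (Or.inl h.symm)))
    · refine hcs' ((mem_s' (cF s')).mpr (Or.inr (Or.inr ⟨?_, by omega⟩)))
      exact run_mem hs h0 (by omega) (by omega)
  have hbranch' : mF s' + cF s' ≤ aF s' := by rw [ha', hm']; omega
  have hne1' : aF s' + 1 ≠ 2 * mF s' := by rw [ha', hm']; omega
  have hfr' : franklin s' = s := by
    rw [franklin, if_pos hbranch', if_neg hne1', ha', hm']
    have e0 : a - 1 + 1 = a := by omega
    have e1 : a - (a - c) = c := by omega
    rw [e0, e1]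
    rw [hs'def, Finset.erase_insert hacn, Finset.erase_insert hcn,
      Finset.insert_erase ha_mem]
  have hne3 : s' ≠ s := by
    intro h
    have : a ∈ s' := h.symm ▸ ha_mem
    rw [mem_s'] at this
    rcases this with h' | h' | ⟨-, h'⟩ <;> omega
  have hpent' : ¬IsPent s' := by
    rw [pent_cond_iff hs'ne h0']
    rintro (⟨-, h1⟩ | ⟨h2, -⟩)
    · exact hne1' h1
    · exact h2 hbranch'
  rw [hfr]
  exact ⟨h0', hs'ne, hsum', hne3, hpent', hfr'⟩

/-- pentagonal partitions are fixed by the involution -/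
lemma pent_fixed {s : Finset ℕ} (hs : s.Nonempty) (h0 : 0 ∉ s) (hp : IsPent s) :
    franklin s = s := by
  rcases (pent_cond_iff hs h0).mp hp with ⟨h1, h2⟩ | ⟨h1, h2⟩
  · rw [franklin, if_pos h1, if_pos h2]
  · rw [franklin, if_neg h1, if_pos h2]

lemma franklin_spec {n : ℕ} (hn : 1 ≤ n) {s : Finset ℕ} (hsD : s ∈ Dfin n) (hp : ¬IsPent s) :
    franklin s ∈ Dfin n ∧ ¬IsPent (franklin s) ∧ franklin s ≠ s ∧
      franklin (franklin s) = s := by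
  obtain ⟨h0, hsum⟩ := mem_Dfin.mp hsD
  have hs : s.Nonempty := by
    rcases s.eq_empty_or_nonempty with rfl | h
    · exfalso; simp at hsum; omega
    · exact h
  have hcond := (pent_cond_iff hs h0).not.mp hp
  push_neg at hcond
  by_cases hbr : mF s + cF s ≤ aF s
  · obtain ⟨ha, hb, hsum', hd, he, hf⟩ := A_spec hs h0 hbr (hcond.1 hbr)
    exact ⟨mem_Dfin.mpr ⟨ha, hsum'.trans hsum⟩, he, hd, hf⟩
  · obtain ⟨ha, hb, hsum', hd, he, hf⟩ := B_spec hs h0 hbr (hcond.2 (by omega))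
    exact ⟨mem_Dfin.mpr ⟨ha, hsum'.trans hsum⟩, he, hd, hf⟩
open scoped Classical

lemma D_card_parity {n : ℕ} (hn : 1 ≤ n) :
    ((Dfin n).card : ZMod 2) = (((Dfin n).filter IsPent).card : ZMod 2) := by
  have hsplit := Finset.card_filter_add_card_filter_not (s := Dfin n) (p := IsPent)
  have heven : ((((Dfin n).filter (fun s => ¬ IsPent s)).card : ℕ) : ZMod 2) = 0 := by
    have h : ∑ _s ∈ (Dfin n).filter (fun s => ¬ IsPent s), (1 : ZMod 2) = 0 := by
      apply Finset.sum_involution (g := fun s _ => franklin s)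
      · intro a ha; decide
      · intro a ha _
        have hm := Finset.mem_filter.mp ha
        exact (franklin_spec hn hm.1 hm.2).2.2.1
      · intro a ha
        have hm := Finset.mem_filter.mp ha
        have := franklin_spec hn hm.1 hm.2
        exact Finset.mem_filter.mpr ⟨this.1, this.2.1⟩
      · intro a ha
        have hm := Finset.mem_filter.mp ha
        exact (franklin_spec hn hm.1 hm.2).2.2.2
    simpa using h
  have : (((Dfin n).card : ℕ) : ZMod 2)
      = ((((Dfin n).filter IsPent).card : ℕ) : ZMod 2)
        + ((((Dfin n).filter (fun s => ¬ IsPent s)).card : ℕ) : ZMod 2) := by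
    rw [← Nat.cast_add, hsplit]
  rw [this, heven, add_zero]

def gp1 (k : ℕ) : ℕ := ∑ x ∈ Finset.Ico k (2*k), x
def gp2 (k : ℕ) : ℕ := ∑ x ∈ Finset.Ico (k+1) (2*k+1), x

lemma gp2_eq {k : ℕ} (hk : 1 ≤ k) : gp2 k = gp1 k + k := by
  have h1 : gp2 k = (∑ x ∈ Finset.Ico (k+1) (2*k), x) + 2*k := by
    rw [gp2, show 2*k+1 = (2*k)+1 from rfl, Finset.sum_Ico_succ_top (by omega)]
  have h2 : gp1 k = k + ∑ x ∈ Finset.Ico (k+1) (2*k), x := by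
    rw [gp1, Finset.sum_eq_sum_Ico_succ_bot (by omega)]
  omega

lemma gp1_succ (k : ℕ) : gp1 (k+1) = gp2 k + (2*k+1) := by
  rw [gp1, gp2, show 2*(k+1) = (2*k+1)+1 by ring, Finset.sum_Ico_succ_top (by omega)]

lemma gp2_ge {k : ℕ} (hk : 1 ≤ k) : k + 1 ≤ gp2 k := by
  have hmem : k + 1 ∈ Finset.Ico (k+1) (2*k+1) := by
    rw [Finset.mem_Ico]
    exact ⟨le_refl _, by omega⟩
  exact Finset.single_le_sum (f := fun x => x) (fun i _ => Nat.zero_le i) hmem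

lemma gp1_mono_step {k : ℕ} (hk : 1 ≤ k) : gp1 k < gp1 (k+1) := by
  have h1 := gp2_eq hk
  have h2 := gp1_succ k
  omega

lemma gp1_mono {j k : ℕ} (hj : 1 ≤ j) (hjk : j ≤ k) : gp1 j ≤ gp1 k := by
  induction k, hjk using Nat.le_induction with
  | base => rfl
  | succ n hn ih => exact le_trans ih (le_of_lt (gp1_mono_step (by omega)))

lemma gp2_mono {j k : ℕ} (hj : 1 ≤ j) (hjk : j < k) : gp2 j < gp2 k := by
  have h1 : gp1 (j+1) ≤ gp1 k := gp1_mono (by omega) (by omega)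
  have h2 := gp1_succ j
  have h3 := gp2_eq (show 1 ≤ k by omega)
  have h4 : gp1 (j+1) ≤ gp1 k := h1
  omega

lemma ico1_sum (k : ℕ) : (Finset.Ico k (2*k)).sum id = gp1 k := rfl
lemma ico2_sum (k : ℕ) : (Finset.Ico (k+1) (2*k+1)).sum id = gp2 k := rfl

lemma pent_mem_sum {n : ℕ} {s : Finset ℕ} (hs : s ∈ Dfin n) (hp : IsPent s) :
    ∃ k, 1 ≤ k ∧ ((s = Finset.Ico k (2*k) ∧ n = gp1 k) ∨
      (s = Finset.Ico (k+1) (2*k+1) ∧ n = gp2 k)) := by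
  obtain ⟨h0, hsum⟩ := mem_Dfin.mp hs
  rcases hp with ⟨k, hk, rfl⟩ | ⟨k, hk, rfl⟩
  · exact ⟨k, hk, Or.inl ⟨rfl, by rw [← hsum, ico1_sum]⟩⟩
  · exact ⟨k, hk, Or.inr ⟨rfl, by rw [← hsum, ico2_sum]⟩⟩

lemma filter_pent_gp2 {k : ℕ} (hk : 1 ≤ k) :
    (Dfin (gp2 k)).filter IsPent = {Finset.Ico (k+1) (2*k+1)} := by
  ext s
  simp only [Finset.mem_filter, Finset.mem_singleton]
  constructor
  · rintro ⟨hsD, hp⟩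
    obtain ⟨j, hj, hcase⟩ := pent_mem_sum hsD hp
    rcases hcase with ⟨rfl, hsum⟩ | ⟨rfl, hsum⟩
    · exfalso
      rcases Nat.lt_or_ge j (k+1) with h | h
      · have h1 : gp1 j ≤ gp1 k := gp1_mono hj (by omega)
        have h2 := gp2_eq hk
        omega
      · have h1 : gp1 (k+1) ≤ gp1 j := gp1_mono (by omega) h
        have h2 := gp1_succ k
        omega
    · have : j = k := by
        by_contra hne
        rcases Nat.lt_or_ge j k with h | h
        · have := gp2_mono hj h; omega
        · have := gp2_mono hk (show k < j by omega); omega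
      rw [this]
  · rintro rfl
    refine ⟨mem_Dfin.mpr ⟨ico2_h0, ico2_sum k⟩, Or.inr ⟨k, hk, rfl⟩⟩

lemma filter_pent_empty {n : ℕ} (h : ∀ t, 1 ≤ t → n ≠ gp1 t ∧ n ≠ gp2 t) :
    (Dfin n).filter IsPent = ∅ := by
  ext s
  simp only [Finset.mem_filter, Finset.notMem_empty, iff_false]
  rintro ⟨hsD, hp⟩
  obtain ⟨j, hj, hcase⟩ := pent_mem_sum hsD hp
  rcases hcase with ⟨-, hsum⟩ | ⟨-, hsum⟩
  · exact (h j hj).1 hsum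
  · exact (h j hj).2 hsum

lemma D_gp2 {k : ℕ} (hk : 1 ≤ k) : (((Dfin (gp2 k)).card : ℕ) : ZMod 2) = 1 := by
  have h1 : 1 ≤ gp2 k := le_trans (by omega) (gp2_ge hk)
  rw [D_card_parity h1, filter_pent_gp2 hk, Finset.card_singleton, Nat.cast_one]

lemma D_nonpent {n : ℕ} (hn : 1 ≤ n) (h : ∀ t, 1 ≤ t → n ≠ gp1 t ∧ n ≠ gp2 t) :
    (((Dfin n).card : ℕ) : ZMod 2) = 0 := by
  rw [D_card_parity hn, filter_pent_empty h, Finset.card_empty, Nat.cast_zero]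


end SubbaraoAux

namespace SubbaraoAux

lemma odd_cast {x : ℕ} (h : Odd x) : (x : ZMod 2) = 1 := by
  obtain ⟨t, rfl⟩ := h
  push_cast
  rw [show ((2 : ZMod 2)) = 0 by rfl]
  ring

lemma not_odd_cast {x : ℕ} (h : ¬ Odd x) : (x : ZMod 2) = 0 := by
  rw [Nat.not_odd_iff_even] at h
  obtain ⟨t, rfl⟩ := h
  push_cast
  rw [← two_mul, show ((2 : ZMod 2)) = 0 by rfl]
  ring

lemma conv_even {n : ℕ} (hn : 1 ≤ n) :
    ∑ m ∈ Finset.range (n+1), ((Dfin (n-m)).card : ZMod 2) * ((partitionFn m : ℕ) : ZMod 2)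
      = 0 := by
  have h1 := pairs_card_even hn
  rw [card_Pairs] at h1
  push_cast at h1
  have h2 := Finset.sum_range_reflect
    (fun m => ((Dfin (n-m)).card : ZMod 2) * ((partitionFn m : ℕ) : ZMod 2)) (n+1)
  rw [← h2]
  rw [show (∑ j ∈ Finset.range (n+1),
      ((Dfin (n-(n+1-1-j))).card : ZMod 2) * ((partitionFn (n+1-1-j) : ℕ) : ZMod 2))
    = ∑ j ∈ Finset.range (n+1),
      ((Dfin j).card : ZMod 2) * ((partitionFn (n-j) : ℕ) : ZMod 2) from
    Finset.sum_congr rfl (fun j hj => by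
      have hjn : j ≤ n := by have := Finset.mem_range.mp hj; omega
      have e1 : n+1-1-j = n-j := by omega
      have e2 : n-(n-j) = j := by omega
      rw [e1, e2])]
  exact h1

lemma gap_lemma {k j : ℕ} (hk : 1 ≤ k) (hj1 : 1 ≤ j) (hjk : j < 2*k+1) :
    ∀ t, 1 ≤ t → gp2 k + j ≠ gp1 t ∧ gp2 k + j ≠ gp2 t := by
  intro t ht
  rcases Nat.lt_or_ge t (k+1) with h | h
  · have h1 : gp1 t ≤ gp1 k := gp1_mono ht (by omega)
    have h2 : gp2 t ≤ gp2 k := by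
      rcases Nat.lt_or_ge t k with h' | h'
      · exact le_of_lt (gp2_mono ht h')
      · have : t = k := by omega
        rw [this]
    have h3 := gp2_eq hk
    omega
  · have h1 : gp1 (k+1) ≤ gp1 t := gp1_mono (by omega) h
    have h2 := gp1_succ k
    have h3 := gp2_eq (show 1 ≤ t by omega)
    omega

lemma partitionFn_zero : partitionFn 0 = 1 := by
  rw [partitionFn, Fintype.card_eq_one_iff]
  refine ⟨⟨0, by intro i h; simp at h, rfl⟩, fun y => Nat.Partition.ext ?_⟩
  show y.parts = 0
  have hy : y.parts.sum = 0 := y.parts_sum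
  rcases eq_or_ne y.parts 0 with h | hne
  · exact h
  · exfalso
    obtain ⟨x, hx⟩ := Multiset.exists_mem_of_ne_zero hne
    have h1 := y.parts_pos hx
    have h2 : x = 0 := by
      by_contra h3
      have : 0 < y.parts.sum := by
        calc 0 < x := h1
        _ ≤ y.parts.sum := Multiset.le_sum_of_mem hx
      omega
    omega

end SubbaraoAux

/-- The special case t = 1 of the odd case of Subbarao's conjecture: the set
of n with p(n) odd is infinite. -/
theorem odd_partition_infinite : {n : ℕ | Odd (partitionFn n)}.Infinite := by
  open SubbaraoAux in
  by_contra hfin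
  rw [Set.not_infinite] at hfin
  set S := hfin.toFinset with hS
  have h0S : 0 ∈ S :=
    (Set.Finite.mem_toFinset hfin).mpr (Set.mem_setOf.mpr (by rw [partitionFn_zero]; exact odd_one))
  have hSne : S.Nonempty := ⟨0, h0S⟩
  set M := S.max' hSne with hM
  have hOddM : Odd (partitionFn M) :=
    (Set.Finite.mem_toFinset hfin).mp (S.max'_mem hSne)
  have hMax : ∀ x, Odd (partitionFn x) → x ≤ M := by
    intro x hx
    exact S.le_max' x ((Set.Finite.mem_toFinset hfin).mpr hx)
  set k := M + 1 with hk
  set n := gp2 k + M with hn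
  have hk1 : 1 ≤ k := by omega
  have hgp2 : 1 ≤ gp2 k := le_trans (by omega) (gp2_ge hk1)
  have hn1 : 1 ≤ n := by omega
  have key := conv_even hn1
  have hsub : S ⊆ Finset.range (n+1) := by
    intro m hm
    have := hMax m ((Set.Finite.mem_toFinset hfin).mp hm)
    exact Finset.mem_range.mpr (by omega)
  have hvanish : ∀ m ∈ Finset.range (n+1), m ∉ S →
      ((Dfin (n-m)).card : ZMod 2) * ((partitionFn m : ℕ) : ZMod 2) = 0 := by
    intro m _ hm
    rw [not_odd_cast (fun hh => hm ((Set.Finite.mem_toFinset hfin).mpr hh)), mul_zero]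
  rw [← Finset.sum_subset hsub hvanish] at key
  rw [← Finset.add_sum_erase S _ (S.max'_mem hSne)] at key
  have hterm : ((Dfin (n-M)).card : ZMod 2) * ((partitionFn M : ℕ) : ZMod 2) = 1 := by
    have e1 : n - M = gp2 k := by omega
    rw [e1, odd_cast hOddM, D_gp2 hk1, mul_one]
  have hrest : ∀ m ∈ S.erase M,
      ((Dfin (n-m)).card : ZMod 2) * ((partitionFn m : ℕ) : ZMod 2) = 0 := by
    intro m hm
    have hmM : m ≠ M := Finset.ne_of_mem_erase hm
    have hmS : m ∈ S := Finset.mem_of_mem_erase hm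
    have hmle : m ≤ M := by
      exact hMax m ((Set.Finite.mem_toFinset hfin).mp hmS)
    have e1 : n - m = gp2 k + (M - m) := by omega
    have hj1 : 1 ≤ M - m := by omega
    have hjk : M - m < 2*k+1 := by omega
    rw [e1, D_nonpent (by omega) (gap_lemma hk1 hj1 hjk), zero_mul]
  rw [Finset.sum_eq_zero hrest, add_zero, hterm] at key
  exact one_ne_zero key
end

section
/- The set {n ∈ ℕ : p(n) is even} is infinite. -/
open Finset

/-- A fixed-point-free involution on a finset makes its cardinality even. -/
lemma even_card_of_involution {α : Type*} (s : Finset α) (g : α → α)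
    (gmem : ∀ a ∈ s, g a ∈ s) (ginv : ∀ a ∈ s, g (g a) = a) (gne : ∀ a ∈ s, g a ≠ a) :
    Even s.card := by
  have h : (∑ _x ∈ s, (1 : ZMod 2)) = 0 := by
    refine Finset.sum_involution (fun a _ => g a) (fun a ha => ?_) (fun a ha _ => gne a ha)
      (fun a ha => gmem a ha) (fun a ha => ginv a ha)
    decide
  rw [Finset.sum_const, nsmul_eq_mul, mul_one] at h
  rw [Nat.even_iff, ← Nat.dvd_iff_mod_eq_zero]
  exact (ZMod.natCast_eq_zero_iff _ 2).mp h

/-- Finset of partitions of `m` into distinct (positive) parts, as finsets. -/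
def DFinset (m : ℕ) : Finset (Finset ℕ) :=
  ((Finset.range (m+1)).powerset).filter (fun S => 0 ∉ S ∧ S.sum id = m)

lemma mem_DFinset {m : ℕ} {S : Finset ℕ} :
    S ∈ DFinset m ↔ 0 ∉ S ∧ S.sum id = m := by
  constructor
  · intro h; exact (Finset.mem_filter.mp h).2
  · intro h
    refine Finset.mem_filter.mpr ⟨Finset.mem_powerset.mpr ?_, h⟩
    intro x hx
    rw [Finset.mem_range, Nat.lt_succ_iff, ← h.2]
    exact Finset.single_le_sum (fun i _ => Nat.zero_le i) hx

lemma DFinset_zero : DFinset 0 = {∅} := by decide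

/-- First pentagonal family: `P1 a = a(3a-1)/2`, as a staircase sum. -/
def P1 (a : ℕ) : ℕ := (Finset.Icc a (2*a-1)).sum id

/-- Second pentagonal family: `P2 a = a(3a+1)/2`. -/
def P2 (a : ℕ) : ℕ := (Finset.Icc (a+1) (2*a)).sum id

lemma sum_Icc_id (a b : ℕ) (h : a ≤ b + 1) :
    2 * (Finset.Icc a b).sum id + a * a = b * b + b + a := by
  induction b with
  | zero => interval_cases a <;> simp
  | succ n ih =>
    rcases Nat.lt_or_ge a (n+2) with h2 | h2
    · rcases Nat.lt_or_ge a (n+1+1) with h3 | h3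
      · rw [← Finset.insert_Icc_right_eq_Icc_add_one (by omega : a ≤ n + 1), Finset.sum_insert (by simp)]
        have := ih (by omega)
        simp only [id] at *
        nlinarith
      · omega
    · have : Finset.Icc a (n+1) = ∅ := by
        apply Finset.Icc_eq_empty; omega
      rw [this]; simp; nlinarith
  
lemma two_P1 (a : ℕ) (ha : 1 ≤ a) : 2 * P1 a + a = 3 * a * a := by
  have := sum_Icc_id a (2*a-1) (by omega)
  unfold P1
  rcases a with _ | b
  · omega
  · have hb : 2 * (b+1) - 1 = 2*b+1 := by omega
    rw [hb] at this ⊢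
    nlinarith [this]

lemma two_P2 (a : ℕ) : 2 * P2 a = 3 * a * a + a := by
  have := sum_Icc_id (a+1) (2*a) (by omega)
  unfold P2; nlinarith [this]

/-- length of the maximal "slope" (consecutive run downward from the max) -/
def slopeLen (S : Finset ℕ) (M : ℕ) : ℕ :=
  Nat.findGreatest (fun j => Finset.Icc (M+1-j) M ⊆ S) M

def franklinMap (S : Finset ℕ) : Finset ℕ :=
  if h : S.Nonempty then
    if S.min' h ≤ slopeLen S (S.max' h) then
      insert (S.max' h + 1) ((S.erase (S.min' h)).erase (S.max' h + 1 - S.min' h))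
    else insert (slopeLen S (S.max' h))
      (insert (S.max' h - slopeLen S (S.max' h)) (S.erase (S.max' h)))
  else ∅

def Exc (S : Finset ℕ) : Prop :=
  ∃ a, 1 ≤ a ∧ (S = Finset.Icc a (2*a-1) ∨ S = Finset.Icc (a+1) (2*a))

section basic
variable {S : Finset ℕ}

lemma max_pos (h : S.Nonempty) (h0 : 0 ∉ S) : 1 ≤ S.max' h := by
  rcases Nat.eq_zero_or_pos (S.max' h) with h1 | h1
  · exact absurd (h1 ▸ S.max'_mem h) h0
  · exact h1

lemma slope_one_le (h : S.Nonempty) (h0 : 0 ∉ S) : 1 ≤ slopeLen S (S.max' h) := by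
  apply Nat.le_findGreatest (max_pos h h0)
  intro x hx
  rw [Finset.mem_Icc] at hx
  have : x = S.max' h := by omega
  exact this ▸ S.max'_mem h

lemma slope_le (h : S.Nonempty) : slopeLen S (S.max' h) ≤ S.max' h := Nat.findGreatest_le _

lemma slope_subset (h : S.Nonempty) (h0 : 0 ∉ S) :
    Finset.Icc (S.max' h + 1 - slopeLen S (S.max' h)) (S.max' h) ⊆ S := by
  apply Nat.findGreatest_spec (P := fun j => Finset.Icc (S.max' h + 1 - j) (S.max' h) ⊆ S)
    (m := 1) (max_pos h h0)
  intro x hx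
  rw [Finset.mem_Icc] at hx
  have : x = S.max' h := by omega
  exact this ▸ S.max'_mem h

lemma slope_notmem (h : S.Nonempty) (h0 : 0 ∉ S) : S.max' h - slopeLen S (S.max' h) ∉ S := by
  set M := S.max' h with hM
  set t := slopeLen S M with ht
  rcases Nat.lt_or_ge t M with hlt | hge
  · intro hmem
    have hng := Nat.findGreatest_is_greatest (P := fun j => Finset.Icc (M+1-j) M ⊆ S)
      (by omega : slopeLen S M < t + 1) (by omega)
    apply hng
    intro x hx
    rw [Finset.mem_Icc] at hx
    rcases Nat.eq_or_lt_of_le hx.1 with he | hlt2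
    · have : x = M - t := by omega
      rw [this]; exact hmem
    · have hsub := slope_subset h h0
      rw [← hM, ← ht] at hsub
      apply hsub
      rw [Finset.mem_Icc]
      omega
  · have : M - t = 0 := by omega
    rw [this]; exact h0

lemma subset_Icc_minmax (h : S.Nonempty) : S ⊆ Finset.Icc (S.min' h) (S.max' h) := by
  intro x hx
  rw [Finset.mem_Icc]
  exact ⟨S.min'_le x hx, S.le_max' x hx⟩

lemma card_le_minmax (h : S.Nonempty) : S.card ≤ S.max' h + 1 - S.min' h := by
  have := Finset.card_le_card (subset_Icc_minmax h)
  rwa [Nat.card_Icc] at this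

lemma slope_le_card (h : S.Nonempty) (h0 : 0 ∉ S) : slopeLen S (S.max' h) ≤ S.card := by
  have h1 := Finset.card_le_card (slope_subset h h0)
  rw [Nat.card_Icc] at h1
  have h2 := slope_le h (S := S)
  omega

end basic

section franklin
variable {S : Finset ℕ}

/-- Case A of Franklin's involution. -/
lemma franklin_caseA (h : S.Nonempty) (h0 : 0 ∉ S) (hnE : ¬ Exc S)
    (hst : S.min' h ≤ slopeLen S (S.max' h)) :
    franklinMap S ∈ {T : Finset ℕ | 0 ∉ T ∧ T.sum id = S.sum id ∧ ¬ Exc T ∧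
      franklinMap T = S ∧ T ≠ S} := by
  set M := S.max' h with hM
  set s := S.min' h with hs
  set t := slopeLen S M with ht
  have hMem_s : s ∈ S := S.min'_mem h
  have hMem_M : M ∈ S := S.max'_mem h
  have hs1 : 1 ≤ s := by
    rcases Nat.eq_zero_or_pos s with h1 | h1
    · exact absurd (h1 ▸ hMem_s) h0
    · exact h1
  have hsM : s ≤ M := S.min'_le M hMem_M
  have ht1 : 1 ≤ t := slope_one_le h h0
  have htM : t ≤ M := slope_le h
  have hslope : Finset.Icc (M+1-t) M ⊆ S := slope_subset h h0
  have hcard1 : t ≤ S.card := slope_le_card h h0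
  have hcard2 : S.card ≤ M + 1 - s := card_le_minmax h
  -- exclude 2s = M+1
  have h2s : 2*s ≤ M := by
    by_contra hcon
    -- then s ≤ t ≤ M+1-s ≤ s so t = s, card = M+1-s, S = Icc s M, M = 2s-1
    have he1 : 2*s = M + 1 := by omega
    have he2 : S.card = M + 1 - s := by omega
    have hSIcc : S = Finset.Icc s M := by
      apply Finset.eq_of_subset_of_card_le (subset_Icc_minmax h)
      rw [Nat.card_Icc]; omega
    exact hnE ⟨s, hs1, Or.inl (by rw [hSIcc]; congr 1; omega)⟩
  have hm1s_mem : M + 1 - s ∈ S := by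
    apply hslope; rw [Finset.mem_Icc]; omega
  set T := insert (M+1) ((S.erase s).erase (M+1-s)) with hT
  have hfS : franklinMap S = T := by
    rw [franklinMap, dif_pos h, if_pos hst]
  have hT_mem : ∀ x, x ∈ T ↔ (x = M+1 ∨ (x ≠ M+1-s ∧ x ≠ s ∧ x ∈ S)) := by
    intro x
    simp only [hT, Finset.mem_insert, Finset.mem_erase]
    try tauto
  have hT_ne : T.Nonempty := Finset.insert_nonempty _ _
  have hT0 : 0 ∉ T := by
    rw [hT_mem]; push_neg
    constructor; · omega
    intro _ _; exact h0
  have hle_M : ∀ x ∈ S, x ≤ M := fun x hx => S.le_max' x hx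
  have hge_s : ∀ x ∈ S, s ≤ x := fun x hx => S.min'_le x hx
  have hM1notS : M + 1 ∉ S := fun hc => by have := hle_M _ hc; omega
  -- sums
  have hsum : T.sum id = S.sum id := by
    have e2 : s + (S.erase s).sum id = S.sum id := Finset.add_sum_erase _ id hMem_s
    have e1 : (M+1-s) + ((S.erase s).erase (M+1-s)).sum id = (S.erase s).sum id :=
      Finset.add_sum_erase _ id (by rw [Finset.mem_erase]; exact ⟨by omega, hm1s_mem⟩)
    have e3 : T.sum id = (M+1) + ((S.erase s).erase (M+1-s)).sum id := by
      rw [hT, Finset.sum_insert (fun hc =>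
        hM1notS (Finset.mem_erase.mp (Finset.mem_erase.mp hc).2).2)]
      rfl
    omega
  -- max of T
  have hmaxT : T.max' hT_ne = M + 1 := by
    apply le_antisymm
    · apply Finset.max'_le
      intro x hx
      rcases (hT_mem x).mp hx with rfl | ⟨_, _, hxS⟩
      · exact le_refl _
      · have := hle_M x hxS; omega
    · exact T.le_max' _ ((hT_mem _).mpr (Or.inl rfl))
  have hm1s_notT : M + 1 - s ∉ T := by
    rw [hT_mem]; push_neg
    exact ⟨by omega, fun hc => absurd rfl hc⟩
  -- min of T
  have hminT : s + 1 ≤ T.min' hT_ne := by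
    apply Finset.le_min'
    intro y hy
    rcases (hT_mem y).mp hy with rfl | ⟨_, hys, hyS⟩
    · omega
    · have := hge_s y hyS; omega
  -- slope of T
  have hslopeT : slopeLen T (M+1) = s := by
    have hPs : Finset.Icc (M+1+1-s) (M+1) ⊆ T := by
      intro x hx
      rw [Finset.mem_Icc] at hx
      rcases Nat.eq_or_lt_of_le hx.2 with he | hlt
      · rw [hT_mem]; exact Or.inl he
      · rw [hT_mem]
        refine Or.inr ⟨by omega, by omega, ?_⟩
        apply hslope
        rw [Finset.mem_Icc]
        omega
    apply le_antisymm
    · by_contra hcon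
      push_neg at hcon
      have hspec : Finset.Icc (M+1+1-slopeLen T (M+1)) (M+1) ⊆ T := by
        apply Nat.findGreatest_spec (P := fun j => Finset.Icc (M+1+1-j) (M+1) ⊆ T)
          (m := s) (by omega) hPs
      have : M + 1 - s ∈ T := by
        apply hspec
        rw [Finset.mem_Icc]
        omega
      exact hm1s_notT this
    · exact Nat.le_findGreatest (by omega) hPs
  -- franklinMap T = S
  have hback : franklinMap T = S := by
    rw [franklinMap, dif_pos hT_ne, hmaxT, hslopeT, if_neg (by omega)]
    have h1 : T.erase (M+1) = (S.erase s).erase (M+1-s) := by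
      rw [hT, Finset.erase_insert]
      intro hc
      exact hM1notS (Finset.mem_erase.mp (Finset.mem_erase.mp hc).2).2
    have h2 : insert (M+1-s) ((S.erase s).erase (M+1-s)) = S.erase s :=
      Finset.insert_erase (Finset.mem_erase.mpr ⟨by omega, hm1s_mem⟩)
    have h3 : insert s (S.erase s) = S := Finset.insert_erase hMem_s
    rw [h1, h2, h3]
  -- T is not exceptional
  have hTnE : ¬ Exc T := by
    rintro ⟨a, ha1, hcase | hcase⟩
    · -- T = Icc a (2a-1)
      have hmem_a : a ∈ T := by rw [hcase, Finset.mem_Icc]; omega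
      have ha_ge : s + 1 ≤ a := by
        rcases (hT_mem a).mp hmem_a with rfl | ⟨_, has, haS⟩
        · omega
        · have := hge_s a haS; omega
      have hup : M + 1 ≤ 2*a - 1 := by
        have : M + 1 ∈ Finset.Icc a (2*a-1) := hcase ▸ (hT_mem (M+1)).mpr (Or.inl rfl)
        rw [Finset.mem_Icc] at this; omega
      have hdown : 2*a - 1 ≤ M + 1 := by
        have h2a : 2*a - 1 ∈ T := by rw [hcase, Finset.mem_Icc]; omega
        rcases (hT_mem _).mp h2a with he | ⟨_, _, hS2⟩
        · omega
        · have := hle_M _ hS2; omega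
      apply hm1s_notT
      rw [hcase, Finset.mem_Icc]
      omega
    · -- T = Icc (a+1) (2a)
      have hmem_a : a + 1 ∈ T := by rw [hcase, Finset.mem_Icc]; omega
      have ha_ge : s ≤ a := by
        rcases (hT_mem (a+1)).mp hmem_a with he | ⟨_, has, haS⟩
        · omega
        · have := hge_s _ haS; omega
      have hup : M + 1 ≤ 2*a := by
        have : M + 1 ∈ Finset.Icc (a+1) (2*a) := hcase ▸ (hT_mem (M+1)).mpr (Or.inl rfl)
        rw [Finset.mem_Icc] at this; omega
      have hdown : 2*a ≤ M + 1 := by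
        have h2a : 2*a ∈ T := by rw [hcase, Finset.mem_Icc]; omega
        rcases (hT_mem _).mp h2a with he | ⟨_, _, hS2⟩
        · omega
        · have := hle_M _ hS2; omega
      -- so M + 1 = 2a; if a = s then 2s = M+1 contradicting h2s; else a ≥ s+1
      have haa : s + 1 ≤ a := by omega
      apply hm1s_notT
      rw [hcase, Finset.mem_Icc]
      omega
  have hTneS : T ≠ S := by
    intro hc
    exact hM1notS (hc ▸ (hT_mem (M+1)).mpr (Or.inl rfl))
  rw [hfS]
  exact ⟨hT0, hsum, hTnE, hback, hTneS⟩

/-- Case B of Franklin's involution. -/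
lemma franklin_caseB (h : S.Nonempty) (h0 : 0 ∉ S) (hnE : ¬ Exc S)
    (hst : ¬ (S.min' h ≤ slopeLen S (S.max' h))) :
    franklinMap S ∈ {T : Finset ℕ | 0 ∉ T ∧ T.sum id = S.sum id ∧ ¬ Exc T ∧
      franklinMap T = S ∧ T ≠ S} := by
  set M := S.max' h with hM
  set s := S.min' h with hs
  set t := slopeLen S M with ht
  have hst0 := hst
  push_neg at hst
  have hMem_s : s ∈ S := S.min'_mem h
  have hMem_M : M ∈ S := S.max'_mem h
  have hs1 : 1 ≤ s := by
    rcases Nat.eq_zero_or_pos s with h1 | h1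
    · exact absurd (h1 ▸ hMem_s) h0
    · exact h1
  have hsM : s ≤ M := S.min'_le M hMem_M
  have ht1 : 1 ≤ t := slope_one_le h h0
  have htM : t ≤ M := slope_le h
  have hslope : Finset.Icc (M+1-t) M ⊆ S := slope_subset h h0
  have hnotmem : M - t ∉ S := slope_notmem h h0
  have hcard1 : t ≤ S.card := slope_le_card h h0
  have hcard2 : S.card ≤ M + 1 - s := card_le_minmax h
  have hle_M : ∀ x ∈ S, x ≤ M := fun x hx => S.le_max' x hx
  have hge_s : ∀ x ∈ S, s ≤ x := fun x hx => S.min'_le x hx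
  have htnotS : t ∉ S := fun hc => absurd (hge_s t hc) (by omega)
  -- exclude M = 2t
  have h2t : 2*t + 1 ≤ M := by
    by_contra hcon
    -- t ≤ card ≤ M+1-s ≤ M-t ≤ t forces equality
    have he1 : M = 2*t := by omega
    have he2 : s = t + 1 := by omega
    have hSIcc : S = Finset.Icc s M := by
      apply Finset.eq_of_subset_of_card_le (subset_Icc_minmax h)
      rw [Nat.card_Icc]; omega
    exact hnE ⟨t, ht1, Or.inr (by rw [hSIcc, he2, he1])⟩
  set T := insert t (insert (M-t) (S.erase M)) with hT
  have hfS : franklinMap S = T := by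
    rw [franklinMap, dif_pos h, if_neg hst0]
  have hT_mem : ∀ x, x ∈ T ↔ (x = t ∨ x = M - t ∨ (x ≠ M ∧ x ∈ S)) := by
    intro x
    simp only [hT, Finset.mem_insert, Finset.mem_erase]
  have hT_ne : T.Nonempty := Finset.insert_nonempty _ _
  have hT0 : 0 ∉ T := by
    rw [hT_mem]; push_neg
    refine ⟨by omega, by omega, fun _ => h0⟩
  have hMnotT : M ∉ T := by
    rw [hT_mem]; push_neg
    exact ⟨by omega, by omega, fun hc => absurd rfl hc⟩
  -- sums
  have hsum : T.sum id = S.sum id := by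
    have e1 : M + (S.erase M).sum id = S.sum id := Finset.add_sum_erase _ id hMem_M
    have hMt_ne : M - t ∉ S.erase M := fun hc => hnotmem (Finset.mem_erase.mp hc).2
    have ht_ne : t ∉ insert (M-t) (S.erase M) := by
      rw [Finset.mem_insert]
      push_neg
      exact ⟨by omega, fun hc => htnotS (Finset.mem_erase.mp hc).2⟩
    have e2 : (insert (M-t) (S.erase M)).sum id = (M-t) + (S.erase M).sum id := by
      rw [Finset.sum_insert hMt_ne]; rfl
    have e3 : T.sum id = t + (insert (M-t) (S.erase M)).sum id := by
      rw [hT, Finset.sum_insert ht_ne]; rfl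
    omega
  -- max of T is M - 1
  have hmaxT : T.max' hT_ne = M - 1 := by
    apply le_antisymm
    · apply Finset.max'_le
      intro x hx
      rcases (hT_mem x).mp hx with rfl | hx2
      · omega
      rcases hx2 with rfl | ⟨hxM, hxS⟩
      · omega
      · have := hle_M x hxS; omega
    · apply T.le_max'
      rcases Nat.eq_or_lt_of_le ht1 with he | hlt
      · rw [hT_mem]; right; left; omega
      · rw [hT_mem]
        refine Or.inr (Or.inr ⟨by omega, ?_⟩)
        apply hslope
        rw [Finset.mem_Icc]
        omega
  -- min of T is t
  have hminT : T.min' hT_ne = t := by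
    apply le_antisymm
    · exact T.min'_le t ((hT_mem t).mpr (Or.inl rfl))
    · apply Finset.le_min'
      intro y hy
      rcases (hT_mem y).mp hy with rfl | hy2
      · omega
      rcases hy2 with rfl | ⟨_, hyS⟩
      · omega
      · have := hge_s y hyS; omega
  -- slope of T is at least t
  have hslopeT : t ≤ slopeLen T (M-1) := by
    apply Nat.le_findGreatest (by omega)
    intro x hx
    rw [Finset.mem_Icc] at hx
    rcases Nat.eq_or_lt_of_le hx.1 with he | hlt
    · rw [hT_mem]; right; left; omega
    · rw [hT_mem]
      refine Or.inr (Or.inr ⟨by omega, ?_⟩)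
      apply hslope
      rw [Finset.mem_Icc]
      omega
  -- franklinMap T = S
  have hback : franklinMap T = S := by
    rw [franklinMap, dif_pos hT_ne, hmaxT, hminT, if_pos (by omega)]
    have h1 : T.erase t = insert (M-t) (S.erase M) := by
      rw [hT, Finset.erase_insert]
      rw [Finset.mem_insert]
      push_neg
      exact ⟨by omega, fun hc => htnotS (Finset.mem_erase.mp hc).2⟩
    have h2 : (insert (M-t) (S.erase M)).erase (M-t) = S.erase M :=
      Finset.erase_insert (fun hc => hnotmem (Finset.mem_erase.mp hc).2)
    have e1 : M - 1 + 1 = M := by omega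
    rw [e1, h1, h2, Finset.insert_erase hMem_M]
  -- T is not exceptional
  have hTnE : ¬ Exc T := by
    rintro ⟨a, ha1, hcase | hcase⟩
    · -- T = Icc a (2a-1) : then min t = a, max M-1 = 2a-1 so M = 2t, contra
      have hmem_a : a ∈ T := by rw [hcase, Finset.mem_Icc]; omega
      have h_a_ge : t ≤ a := by
        have := Finset.min'_le T a hmem_a
        omega
      have h_a_le : a ≤ t := by
        have := (hT_mem t).mpr (Or.inl rfl)
        rw [hcase, Finset.mem_Icc] at this
        omega
      have hup : 2*a - 1 ≤ M - 1 := by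
        have h2a : 2*a - 1 ∈ T := by rw [hcase, Finset.mem_Icc]; omega
        have := Finset.le_max' T _ h2a
        omega
      have hdown : M - 1 ≤ 2*a - 1 := by
        have hm : M - 1 ∈ T := hmaxT ▸ T.max'_mem hT_ne
        rw [hcase, Finset.mem_Icc] at hm
        omega
      omega
    · -- T = Icc (a+1) (2a) : min t = a+1, max M-1 = 2a, so M = 2t-1, contra
      have hmem_a : a + 1 ∈ T := by rw [hcase, Finset.mem_Icc]; omega
      have h_a_ge : t ≤ a + 1 := by
        have := Finset.min'_le T _ hmem_a
        omega
      have h_a_le : a + 1 ≤ t := by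
        have := (hT_mem t).mpr (Or.inl rfl)
        rw [hcase, Finset.mem_Icc] at this
        omega
      have hup : 2*a ≤ M - 1 := by
        have h2a : 2*a ∈ T := by rw [hcase, Finset.mem_Icc]; omega
        have := Finset.le_max' T _ h2a
        omega
      have hdown : M - 1 ≤ 2*a := by
        have hm : M - 1 ∈ T := hmaxT ▸ T.max'_mem hT_ne
        rw [hcase, Finset.mem_Icc] at hm
        omega
      omega
  have hTneS : T ≠ S := by
    intro hc
    exact hMnotT (hc ▸ hMem_M)
  rw [hfS]
  exact ⟨hT0, hsum, hTnE, hback, hTneS⟩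


lemma franklin_spec (h : S.Nonempty) (h0 : 0 ∉ S) (hnE : ¬ Exc S) :
    0 ∉ franklinMap S ∧ (franklinMap S).sum id = S.sum id ∧ ¬ Exc (franklinMap S) ∧
      franklinMap (franklinMap S) = S ∧ franklinMap S ≠ S := by
  by_cases hc : S.min' h ≤ slopeLen S (S.max' h)
  · exact franklin_caseA h h0 hnE hc
  · exact franklin_caseB h h0 hnE hc

end franklin

def Pent (n : ℕ) : Prop := ∃ a, 1 ≤ a ∧ (n = P1 a ∨ n = P2 a)

lemma P1_lt_P1 {a b : ℕ} (ha : 1 ≤ a) (hab : a < b) : P1 a < P1 b := by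
  have A := two_P1 a ha
  have B := two_P1 b (by omega)
  nlinarith

lemma P2_lt_P2 {a b : ℕ} (hab : a < b) : P2 a < P2 b := by
  have A := two_P2 a
  have B := two_P2 b
  nlinarith

lemma P1_lt_P2 {a : ℕ} (ha : 1 ≤ a) : P1 a < P2 a := by
  have A := two_P1 a ha
  have B := two_P2 a
  omega

lemma P2_lt_P1_succ {a : ℕ} (ha : 1 ≤ a) : P2 a + 2*a < P1 (a+1) + 1 := by
  have A := two_P1 (a+1) (by omega)
  have B := two_P2 a
  nlinarith

lemma P1_ne_P2 {a b : ℕ} (ha : 1 ≤ a) (hb : 1 ≤ b) : P1 a ≠ P2 b := by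
  intro hE
  rcases le_or_gt a b with hab | hab
  · have : P1 a ≤ P1 b := by
      rcases Nat.eq_or_lt_of_le hab with rfl | hlt
      · exact le_refl _
      · exact le_of_lt (P1_lt_P1 ha hlt)
    have := P1_lt_P2 hb
    omega
  · have h1 : P2 b + 2*b < P1 (b+1) + 1 := P2_lt_P1_succ hb
    have h2 : P1 (b+1) ≤ P1 a := by
      rcases Nat.eq_or_lt_of_le (by omega : b + 1 ≤ a) with he | hlt
      · rw [he]
      · exact le_of_lt (P1_lt_P1 (by omega) hlt)
    omega

lemma P1_pos {a : ℕ} (ha : 1 ≤ a) : 1 ≤ P1 a := by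
  have := two_P1 a ha; nlinarith

lemma P2_pos {a : ℕ} (ha : 1 ≤ a) : 1 ≤ P2 a := by
  have := two_P2 a; nlinarith

lemma nonempty_of_mem_DFinset {n : ℕ} (hn : 1 ≤ n) {S : Finset ℕ} (hS : S ∈ DFinset n) :
    S.Nonempty := by
  rw [Finset.nonempty_iff_ne_empty]
  rintro rfl
  have := (mem_DFinset.mp hS).2
  simp at this
  omega

open Classical in
lemma even_filter_nonExc {n : ℕ} (hn : 1 ≤ n) :
    Even ((DFinset n).filter (fun S => ¬ Exc S)).card := by
  apply even_card_of_involution _ franklinMap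
  · intro S hS
    rw [Finset.mem_filter] at hS ⊢
    obtain ⟨hD, hnE⟩ := hS
    obtain ⟨h0, hsum⟩ := mem_DFinset.mp hD
    obtain ⟨f0, fsum, fnE, _, _⟩ :=
      franklin_spec (nonempty_of_mem_DFinset hn hD) h0 hnE
    exact ⟨mem_DFinset.mpr ⟨f0, by rw [fsum, hsum]⟩, fnE⟩
  · intro S hS
    rw [Finset.mem_filter] at hS
    obtain ⟨hD, hnE⟩ := hS
    obtain ⟨h0, hsum⟩ := mem_DFinset.mp hD
    exact (franklin_spec (nonempty_of_mem_DFinset hn hD) h0 hnE).2.2.2.1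
  · intro S hS
    rw [Finset.mem_filter] at hS
    obtain ⟨hD, hnE⟩ := hS
    obtain ⟨h0, hsum⟩ := mem_DFinset.mp hD
    exact (franklin_spec (nonempty_of_mem_DFinset hn hD) h0 hnE).2.2.2.2

lemma sum_Icc_staircase1 (a : ℕ) : (Finset.Icc a (2*a-1)).sum id = P1 a := rfl
lemma sum_Icc_staircase2 (a : ℕ) : (Finset.Icc (a+1) (2*a)).sum id = P2 a := rfl

lemma zero_not_mem_Icc1 {a : ℕ} (ha : 1 ≤ a) : (0 : ℕ) ∉ Finset.Icc a (2*a-1) := by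
  rw [Finset.mem_Icc]; omega

lemma zero_not_mem_Icc2 {a : ℕ} : (0 : ℕ) ∉ Finset.Icc (a+1) (2*a) := by
  rw [Finset.mem_Icc]; omega

open Classical in
lemma filter_Exc_of_not_pent {n : ℕ} (hnp : ¬ Pent n) :
    (DFinset n).filter Exc = ∅ := by
  rw [Finset.eq_empty_iff_forall_notMem]
  intro S hS
  rw [Finset.mem_filter] at hS
  obtain ⟨hD, a, ha, hc | hc⟩ := hS
  · exact hnp ⟨a, ha, Or.inl (by rw [← (mem_DFinset.mp hD).2, hc]; rfl)⟩
  · exact hnp ⟨a, ha, Or.inr (by rw [← (mem_DFinset.mp hD).2, hc]; rfl)⟩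

open Classical in
lemma filter_Exc_of_pent {n : ℕ} (hp : Pent n) :
    ((DFinset n).filter Exc).card = 1 := by
  obtain ⟨k, hk, hcase | hcase⟩ := hp
  · rw [Finset.card_eq_one]
    refine ⟨Finset.Icc k (2*k-1), ?_⟩
    rw [Finset.eq_singleton_iff_unique_mem]
    constructor
    · rw [Finset.mem_filter, mem_DFinset]
      exact ⟨⟨zero_not_mem_Icc1 hk, hcase ▸ rfl⟩, ⟨k, hk, Or.inl rfl⟩⟩
    · intro S hS
      rw [Finset.mem_filter] at hS
      obtain ⟨hD, a, ha, hc | hc⟩ := hS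
      · have hsum := (mem_DFinset.mp hD).2
        rw [hc] at hsum
        rw [sum_Icc_staircase1] at hsum
        have : a = k := by
          by_contra hne
          rcases Nat.lt_or_ge a k with hlt | hge
          · have := P1_lt_P1 ha hlt; omega
          · have := P1_lt_P1 hk (by omega : k < a); omega
        rw [hc, this]
      · have hsum := (mem_DFinset.mp hD).2
        rw [hc, sum_Icc_staircase2] at hsum
        exact absurd (hsum.trans hcase).symm (P1_ne_P2 hk ha)
  · rw [Finset.card_eq_one]
    refine ⟨Finset.Icc (k+1) (2*k), ?_⟩
    rw [Finset.eq_singleton_iff_unique_mem]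
    constructor
    · rw [Finset.mem_filter, mem_DFinset]
      exact ⟨⟨zero_not_mem_Icc2, hcase ▸ rfl⟩, ⟨k, hk, Or.inr rfl⟩⟩
    · intro S hS
      rw [Finset.mem_filter] at hS
      obtain ⟨hD, a, ha, hc | hc⟩ := hS
      · have hsum := (mem_DFinset.mp hD).2
        rw [hc, sum_Icc_staircase1] at hsum
        exact absurd (hsum.trans hcase) (P1_ne_P2 ha hk)
      · have hsum := (mem_DFinset.mp hD).2
        rw [hc, sum_Icc_staircase2] at hsum
        have : a = k := by
          by_contra hne
          rcases Nat.lt_or_ge a k with hlt | hge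
          · have := P2_lt_P2 hlt; omega
          · have := P2_lt_P2 (by omega : k < a); omega
        rw [hc, this]

open Classical in
theorem DFinset_card_even {n : ℕ} (hn : 1 ≤ n) (hnp : ¬ Pent n) :
    Even (DFinset n).card := by
  have h1 := Finset.card_filter_add_card_filter_not (s := DFinset n) (p := Exc)
  have h2 := even_filter_nonExc hn
  rw [filter_Exc_of_not_pent hnp] at h1
  simp at h1
  rwa [← h1]

open Classical in
theorem DFinset_card_odd {n : ℕ} (hn : 1 ≤ n) (hp : Pent n) :
    Odd (DFinset n).card := by
  have h1 := Finset.card_filter_add_card_filter_not (s := DFinset n) (p := Exc)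
  have h2 := even_filter_nonExc hn
  rw [filter_Exc_of_pent hp] at h1
  rcases h2 with ⟨c, hc⟩
  exact ⟨c, by omega⟩

/-- The multisets of parts of partitions of `k`. -/
def MFinset (k : ℕ) : Finset (Multiset ℕ) :=
  Finset.univ.image (fun p : Nat.Partition k => p.parts)

lemma mem_MFinset {k : ℕ} {P : Multiset ℕ} :
    P ∈ MFinset k ↔ (∀ i ∈ P, 0 < i) ∧ P.sum = k := by
  constructor
  · intro h
    obtain ⟨p, _, rfl⟩ := Finset.mem_image.mp h
    exact ⟨fun i hi => p.parts_pos hi, p.parts_sum⟩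
  · rintro ⟨h1, h2⟩
    exact Finset.mem_image.mpr ⟨⟨P, fun hi => h1 _ hi, h2⟩, Finset.mem_univ _, rfl⟩

lemma card_MFinset (k : ℕ) : (MFinset k).card = Fintype.card (Nat.Partition k) := by
  rw [MFinset, Finset.card_image_of_injective _ (fun p q hpq => Nat.Partition.ext hpq),
    Finset.card_univ]

def ConvF (n : ℕ) : Finset (Finset ℕ × Multiset ℕ) :=
  (Finset.range (n+1)).biUnion (fun m => (DFinset m) ×ˢ (MFinset (n - m)))

lemma mem_ConvF {n : ℕ} {x : Finset ℕ × Multiset ℕ} :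
    x ∈ ConvF n ↔ 0 ∉ x.1 ∧ (∀ i ∈ x.2, 0 < i) ∧ x.1.sum id + x.2.sum = n := by
  rw [ConvF, Finset.mem_biUnion]
  constructor
  · rintro ⟨m, hm, hx⟩
    rw [Finset.mem_range] at hm
    rw [Finset.mem_product] at hx
    obtain ⟨h1, h2⟩ := hx
    obtain ⟨h10, h1s⟩ := mem_DFinset.mp h1
    obtain ⟨h2p, h2s⟩ := mem_MFinset.mp h2
    exact ⟨h10, h2p, by omega⟩
  · rintro ⟨h0, hp, hs⟩
    refine ⟨x.1.sum id, Finset.mem_range.mpr (by omega), Finset.mem_product.mpr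
      ⟨mem_DFinset.mpr ⟨h0, rfl⟩, mem_MFinset.mpr ⟨hp, by omega⟩⟩⟩

lemma card_ConvF (n : ℕ) :
    (ConvF n).card = ∑ m ∈ Finset.range (n+1),
      (DFinset m).card * Fintype.card (Nat.Partition (n-m)) := by
  rw [ConvF, Finset.card_biUnion]
  · refine Finset.sum_congr rfl (fun m _ => ?_)
    rw [Finset.card_product, card_MFinset]
  · intro m _ m' _ hne
    apply Finset.disjoint_left.mpr
    intro x hx hx'
    rw [Finset.mem_product] at hx hx'
    exact hne (((mem_DFinset.mp hx.1).2.symm).trans (mem_DFinset.mp hx'.1).2)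

/-- the moving-the-largest-part involution -/
def convMap (x : Finset ℕ × Multiset ℕ) : Finset ℕ × Multiset ℕ :=
  if x.2.sup ≤ x.1.sup id then (x.1.erase (x.1.sup id), (x.1.sup id) ::ₘ x.2)
  else (insert x.2.sup x.1, x.2.erase x.2.sup)

lemma finset_sup_mem {S : Finset ℕ} (h : S.Nonempty) : S.sup id ∈ S := by
  obtain ⟨b, hb, he⟩ := Finset.exists_mem_eq_sup S h id
  rw [he]; exact hb

lemma multiset_sup_mem {P : Multiset ℕ} (h : P ≠ 0) : P.sup ∈ P := by
  induction P using Multiset.induction_on with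
  | empty => exact absurd rfl h
  | cons a s ih =>
    rw [Multiset.sup_cons]
    rcases eq_or_ne s 0 with rfl | hs
    · simp
    · rcases max_cases a s.sup with ⟨he, _⟩ | ⟨he, _⟩
      · rw [he]; exact Multiset.mem_cons_self _ _
      · rw [he]; exact Multiset.mem_cons_of_mem (ih hs)

lemma even_card_ConvF {n : ℕ} (hn : 1 ≤ n) : Even (ConvF n).card := by
  apply even_card_of_involution _ convMap
  case gmem =>
    intro x hx
    obtain ⟨h0, hp, hs⟩ := mem_ConvF.mp hx
    by_cases hc : x.2.sup ≤ x.1.sup id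
    · -- move max of S into P
      have hSne : x.1.Nonempty := by
        rw [Finset.nonempty_iff_ne_empty]
        rintro he
        rw [he] at hc hs
        simp at hc hs
        -- then sup of P is 0, so P = 0 (parts positive)
        have hP0 : x.2 = 0 := by
          by_contra hP
          have := multiset_sup_mem hP
          have := hp _ this
          omega
        rw [hP0] at hs
        simp at hs
        omega
      have haS : x.1.sup id ∈ x.1 := finset_sup_mem hSne
      have ha1 : 1 ≤ x.1.sup id := by
        by_contra hcon
        push_neg at hcon
        interval_cases h : (x.1.sup id)
        · exact h0 (h ▸ haS)
      rw [convMap, if_pos hc, mem_ConvF]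
      refine ⟨fun hcon => h0 (Finset.mem_of_mem_erase hcon), ?_, ?_⟩
      · intro i hi
        rcases Multiset.mem_cons.mp hi with rfl | hi2
        · exact ha1
        · exact hp _ hi2
      · have h5 := Finset.add_sum_erase x.1 id haS
        rw [Multiset.sum_cons]
        have hs' : (∑ x ∈ x.1, x) + x.2.sum = n := hs
        simp only [id_eq] at h5
        show (∑ x ∈ x.1.erase (x.1.sup id), x) + (x.1.sup id + x.2.sum) = n
        omega
    · push_neg at hc
      have hPne : x.2 ≠ 0 := by
        intro he
        rw [he] at hc
        simp at hc
      have hbP : x.2.sup ∈ x.2 := multiset_sup_mem hPne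
      have hb1 : 1 ≤ x.2.sup := hp _ hbP
      have hbS : x.2.sup ∉ x.1 := by
        intro hcon
        have := Finset.le_sup (f := id) hcon
        simp only [id_eq] at this
        omega
      rw [convMap, if_neg (by omega), mem_ConvF]
      refine ⟨?_, fun i hi => hp _ (Multiset.mem_of_mem_erase hi), ?_⟩
      · rw [Finset.mem_insert]
        push_neg
        exact ⟨by omega, h0⟩
      · rw [Finset.sum_insert hbS]
        have := Multiset.cons_erase hbP
        have hsum2 : x.2.sum = x.2.sup + (x.2.erase x.2.sup).sum := by
          conv_lhs => rw [← this]
          rw [Multiset.sum_cons]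
        have hs' : (∑ x ∈ x.1, x) + x.2.sum = n := hs
        show x.2.sup + (∑ x ∈ x.1, x) + (x.2.erase x.2.sup).sum = n
        omega
  case ginv =>
    intro x hx
    obtain ⟨h0, hp, hs⟩ := mem_ConvF.mp hx
    by_cases hc : x.2.sup ≤ x.1.sup id
    · have hSne : x.1.Nonempty := by
        rw [Finset.nonempty_iff_ne_empty]
        rintro he
        rw [he] at hc hs
        simp at hc hs
        have hP0 : x.2 = 0 := by
          by_contra hP
          have := multiset_sup_mem hP
          have := hp _ this
          omega
        rw [hP0] at hs
        simp at hs
        omega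
      set a := x.1.sup id with ha
      have haS : a ∈ x.1 := finset_sup_mem hSne
      have ha1 : 1 ≤ a := by
        rcases Nat.eq_zero_or_pos a with h1 | h1
        · exact absurd (h1 ▸ haS) h0
        · exact h1
      have hsup2 : (a ::ₘ x.2).sup = a := by
        rw [Multiset.sup_cons, max_eq_left hc]
      have hsup1 : ((x.1.erase a).sup id) < a := by
        rcases Finset.eq_empty_or_nonempty (x.1.erase a) with he | hne
        · rw [he]; simp; omega
        · have hm := finset_sup_mem hne
          have hmem := Finset.mem_of_mem_erase hm
          have hne2 := (Finset.mem_erase.mp hm).1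
          have hle := Finset.le_sup (f := id) hmem
          simp only [id_eq] at hle
          rw [← ha] at hle
          omega
      have hg1 : convMap x = (x.1.erase a, a ::ₘ x.2) := by rw [convMap, if_pos hc]
      rw [hg1, convMap]
      have hcond : ¬ ((x.1.erase a, a ::ₘ x.2).2.sup ≤ (x.1.erase a, a ::ₘ x.2).1.sup id) := by
        show ¬ ((a ::ₘ x.2).sup ≤ (x.1.erase a).sup id)
        rw [hsup2]; omega
      rw [if_neg hcond]
      show (insert (a ::ₘ x.2).sup (x.1.erase a), (a ::ₘ x.2).erase ((a ::ₘ x.2).sup)) = x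
      rw [hsup2, Finset.insert_erase haS, Multiset.erase_cons_head]
    · push_neg at hc
      have hPne : x.2 ≠ 0 := by
        intro he
        rw [he] at hc
        simp at hc
      set b := x.2.sup with hb
      have hbP : b ∈ x.2 := multiset_sup_mem hPne
      have hbS : b ∉ x.1 := by
        intro hcon
        have hle := Finset.le_sup (f := id) hcon
        simp only [id_eq] at hle
        omega
      have hsup1 : (insert b x.1).sup id = b := by
        rw [Finset.sup_insert]
        show max b (x.1.sup id) = b
        rw [max_eq_left (by omega)]
      have hsup2 : (x.2.erase b).sup ≤ b := by
        rw [Multiset.sup_le]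
        intro y hy
        rw [hb]
        exact Multiset.le_sup (Multiset.mem_of_mem_erase hy)
      have hg1 : convMap x = (insert b x.1, x.2.erase b) := by
        rw [convMap, if_neg (by omega)]
      rw [hg1, convMap]
      have hcond : ((insert b x.1, x.2.erase b).2.sup ≤ (insert b x.1, x.2.erase b).1.sup id) := by
        show ((x.2.erase b).sup ≤ (insert b x.1).sup id)
        rw [hsup1]; exact hsup2
      rw [if_pos hcond]
      show ((insert b x.1).erase ((insert b x.1).sup id),
        ((insert b x.1).sup id) ::ₘ (x.2.erase b)) = x
      rw [hsup1, Finset.erase_insert hbS, Multiset.cons_erase hbP]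
  case gne =>
    intro x hx
    obtain ⟨h0, hp, hs⟩ := mem_ConvF.mp hx
    by_cases hc : x.2.sup ≤ x.1.sup id
    · have hSne : x.1.Nonempty := by
        rw [Finset.nonempty_iff_ne_empty]
        rintro he
        rw [he] at hc hs
        simp at hc hs
        have hP0 : x.2 = 0 := by
          by_contra hP
          have := multiset_sup_mem hP
          have := hp _ this
          omega
        rw [hP0] at hs
        simp at hs
        omega
      have haS : x.1.sup id ∈ x.1 := finset_sup_mem hSne
      have hg1 : convMap x = (x.1.erase (x.1.sup id), (x.1.sup id) ::ₘ x.2) := by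
        rw [convMap, if_pos hc]
      rw [hg1]
      intro hcon
      have h2 : x.1.erase (x.1.sup id) = x.1 := congrArg Prod.fst hcon
      have : x.1.sup id ∈ x.1.erase (x.1.sup id) := by rw [h2]; exact haS
      exact Finset.notMem_erase _ _ this
    · push_neg at hc
      have hbS : x.2.sup ∉ x.1 := by
        intro hcon
        have hle := Finset.le_sup (f := id) hcon
        simp only [id_eq] at hle
        omega
      have hg1 : convMap x = (insert x.2.sup x.1, x.2.erase x.2.sup) := by
        rw [convMap, if_neg (by omega)]
      rw [hg1]
      intro hcon
      have h2 : insert x.2.sup x.1 = x.1 := congrArg Prod.fst hcon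
      apply hbS
      rw [← h2]
      exact Finset.mem_insert_self _ _

lemma even_conv {n : ℕ} (hn : 1 ≤ n) :
    Even (∑ m ∈ Finset.range (n+1), (DFinset m).card * partitionFn (n-m)) := by
  have h1 := even_card_ConvF hn
  rw [card_ConvF] at h1
  exact h1

lemma even_cast_zmod {v : ℕ} (h : Even v) : (v : ZMod 2) = 0 := by
  rw [ZMod.natCast_eq_zero_iff]
  exact even_iff_two_dvd.mp h

lemma odd_cast_zmod {v : ℕ} (h : Odd v) : (v : ZMod 2) = 1 := by
  rw [← ZMod.natCast_mod, Nat.odd_iff.mp h]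
  rfl

lemma P1_le_of_le {a k : ℕ} (ha : 1 ≤ a) (h : a ≤ k) : P1 a ≤ P1 k := by
  rcases Nat.eq_or_lt_of_le h with rfl | hlt
  · exact le_refl _
  · exact le_of_lt (P1_lt_P1 ha hlt)

lemma P2_le_of_le {a k : ℕ} (h : a ≤ k) : P2 a ≤ P2 k := by
  rcases Nat.eq_or_lt_of_le h with rfl | hlt
  · exact le_refl _
  · exact le_of_lt (P2_lt_P2 hlt)

/-- The set of n with p(n) even is infinite. -/
theorem even_partition_infinite : {n : ℕ | Even (partitionFn n)}.Infinite := by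
  by_contra hfin
  rw [Set.not_infinite] at hfin
  obtain ⟨N0, hN0⟩ := hfin.bddAbove
  set N := N0 + 1 with hN
  have hNodd : ∀ j, N ≤ j → Odd (partitionFn j) := by
    intro j hj
    rw [← Nat.not_even_iff_odd]
    intro he
    have := hN0 (Set.mem_setOf.mpr he)
    omega
  set k := N + 1 with hk
  have hk1 : 1 ≤ k := by omega
  set x := P2 k + 1 with hx
  set n := x + N with hn
  have hn1 : 1 ≤ n := by omega
  -- the window (x, n] contains no pentagonal number
  have hwindow : ∀ m, x + 1 ≤ m → m ≤ n → ¬ Pent m := by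
    rintro m hm1 hm2 ⟨a, ha1, hc | hc⟩
    · -- m = P1 a
      have hak : k + 1 ≤ a := by
        by_contra hcon
        push_neg at hcon
        have h1 : P1 a ≤ P1 k := P1_le_of_le ha1 (by omega)
        have h2 : P1 k < P2 k := P1_lt_P2 hk1
        omega
      have h3 : P1 (k+1) ≤ P1 a := P1_le_of_le (by omega) hak
      have h4 := P2_lt_P1_succ hk1
      omega
    · have hak : k + 1 ≤ a := by
        by_contra hcon
        push_neg at hcon
        have h1 : P2 a ≤ P2 k := P2_le_of_le (by omega)
        omega
      have h3 : P2 (k+1) ≤ P2 a := P2_le_of_le hak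
      have h4 := P2_lt_P1_succ hk1
      have h5 : P1 (k+1) < P2 (k+1) := P1_lt_P2 (by omega)
      omega
  -- pentagonal numbers up to x are exactly those with generator ≤ k
  have hgen1 : ∀ a, 1 ≤ a → P1 a ≤ x → a ≤ k := by
    intro a ha hle
    by_contra hcon
    push_neg at hcon
    have h3 : P1 (k+1) ≤ P1 a := P1_le_of_le (by omega) hcon
    have h4 := P2_lt_P1_succ hk1
    omega
  have hgen2 : ∀ a, 1 ≤ a → P2 a ≤ x → a ≤ k := by
    intro a ha hle
    by_contra hcon
    push_neg at hcon
    have h3 : P2 (k+1) ≤ P2 a := P2_le_of_le hcon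
    have h4 := P2_lt_P1_succ hk1
    have h5 : P1 (k+1) < P2 (k+1) := P1_lt_P2 (by omega)
    omega
  set PS : Finset ℕ := ((Finset.Icc 1 k).image P1) ∪ ((Finset.Icc 1 k).image P2) with hPS
  have hPS_mem : ∀ m ∈ PS, (1 ≤ m ∧ Pent m) := by
    intro m hm
    rw [hPS, Finset.mem_union] at hm
    rcases hm with hm | hm
    · obtain ⟨a, ha, rfl⟩ := Finset.mem_image.mp hm
      rw [Finset.mem_Icc] at ha
      exact ⟨P1_pos ha.1, ⟨a, ha.1, Or.inl rfl⟩⟩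
    · obtain ⟨a, ha, rfl⟩ := Finset.mem_image.mp hm
      rw [Finset.mem_Icc] at ha
      exact ⟨P2_pos ha.1, ⟨a, ha.1, Or.inr rfl⟩⟩
  have hPS_sub : ∀ m ∈ PS, m ≤ x := by
    intro m hm
    rw [hPS, Finset.mem_union] at hm
    rcases hm with hm | hm
    · obtain ⟨a, ha, rfl⟩ := Finset.mem_image.mp hm
      rw [Finset.mem_Icc] at ha
      have h1 : P1 a ≤ P1 k := P1_le_of_le ha.1 ha.2
      have h2 : P1 k < P2 k := P1_lt_P2 hk1
      omega
    · obtain ⟨a, ha, rfl⟩ := Finset.mem_image.mp hm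
      rw [Finset.mem_Icc] at ha
      have h1 : P2 a ≤ P2 k := P2_le_of_le ha.2
      omega
  have hPS_card : PS.card = 2 * k := by
    rw [hPS, Finset.card_union_of_disjoint, Finset.card_image_of_injOn,
      Finset.card_image_of_injOn]
    · rw [Nat.card_Icc]; omega
    · intro a ha b hb hab
      rw [Finset.mem_coe, Finset.mem_Icc] at ha hb
      by_contra hne
      rcases Nat.lt_or_ge a b with hlt | hge
      · have := P2_lt_P2 hlt; omega
      · have := P2_lt_P2 (by omega : b < a); omega
    · intro a ha b hb hab
      rw [Finset.mem_coe, Finset.mem_Icc] at ha hb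
      by_contra hne
      rcases Nat.lt_or_ge a b with hlt | hge
      · have := P1_lt_P1 ha.1 hlt; omega
      · have := P1_lt_P1 hb.1 (by omega : b < a); omega
    · rw [Finset.disjoint_left]
      rintro m hm1 hm2
      obtain ⟨a, ha, hae⟩ := Finset.mem_image.mp hm1
      obtain ⟨b, hb, hbe⟩ := Finset.mem_image.mp hm2
      rw [Finset.mem_Icc] at ha hb
      exact P1_ne_P2 ha.1 hb.1 (hae.trans hbe.symm)
  -- now the mod-2 computation
  have htot := even_conv hn1
  have htot2 : ((∑ m ∈ Finset.range (n+1), (DFinset m).card * partitionFn (n-m) : ℕ) : ZMod 2)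
      = 0 := even_cast_zmod htot
  rw [Nat.cast_sum] at htot2
  have hsplit : (Finset.range (n+1)) = Finset.Ico 0 (x+1) ∪ Finset.Ico (x+1) (n+1) := by
    rw [Finset.range_eq_Ico, ← Finset.Ico_union_Ico_eq_Ico (by omega : (0:ℕ) ≤ x+1) (by omega)]
  rw [hsplit, Finset.sum_union (by
    rw [Finset.disjoint_left]
    intro m hm1 hm2
    rw [Finset.mem_Ico] at hm1 hm2
    omega)] at htot2
  -- second sum is 0
  have hsum2 : (∑ m ∈ Finset.Ico (x+1) (n+1),
      (((DFinset m).card * partitionFn (n-m) : ℕ) : ZMod 2)) = 0 := by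
    apply Finset.sum_eq_zero
    intro m hm
    rw [Finset.mem_Ico] at hm
    have hnp : ¬ Pent m := hwindow m hm.1 (by omega)
    have he : Even ((DFinset m).card) := DFinset_card_even (by omega) hnp
    rw [Nat.cast_mul, even_cast_zmod he, zero_mul]
  rw [hsum2, add_zero] at htot2
  -- first sum
  have hfirst : (∑ m ∈ Finset.Ico 0 (x+1),
      (((DFinset m).card * partitionFn (n-m) : ℕ) : ZMod 2)) = 1 := by
    have hterm : ∀ m ∈ Finset.Ico 0 (x+1),
        (((DFinset m).card * partitionFn (n-m) : ℕ) : ZMod 2) = ((DFinset m).card : ZMod 2) := by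
      intro m hm
      rw [Finset.mem_Ico] at hm
      have hodd : Odd (partitionFn (n-m)) := hNodd _ (by omega)
      rw [Nat.cast_mul, odd_cast_zmod hodd, mul_one]
    rw [Finset.sum_congr rfl hterm]
    -- restrict to insert 0 PS
    have hsub : insert 0 PS ⊆ Finset.Ico 0 (x+1) := by
      intro m hm
      rcases Finset.mem_insert.mp hm with rfl | hm2
      · rw [Finset.mem_Ico]; omega
      · rw [Finset.mem_Ico]
        have := hPS_sub m hm2
        omega
    rw [← Finset.sum_subset hsub (by
      intro m hm1 hm2
      rw [Finset.mem_Ico] at hm1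
      rw [Finset.mem_insert] at hm2
      push_neg at hm2
      obtain ⟨hm0, hmPS⟩ := hm2
      have hnp : ¬ Pent m := by
        rintro ⟨a, ha1, hc | hc⟩
        · apply hmPS
          rw [hPS, Finset.mem_union]
          left
          refine Finset.mem_image.mpr ⟨a, ?_, hc.symm⟩
          rw [Finset.mem_Icc]
          exact ⟨ha1, hgen1 a ha1 (by omega)⟩
        · apply hmPS
          rw [hPS, Finset.mem_union]
          right
          refine Finset.mem_image.mpr ⟨a, ?_, hc.symm⟩
          rw [Finset.mem_Icc]
          exact ⟨ha1, hgen2 a ha1 (by omega)⟩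
      exact even_cast_zmod (DFinset_card_even (by omega) hnp))]
    have h0PS : 0 ∉ PS := by
      intro hc
      have := (hPS_mem 0 hc).1
      omega
    rw [Finset.sum_insert h0PS]
    have hc0 : ((DFinset 0).card : ZMod 2) = 1 := by
      rw [DFinset_zero]
      rfl
    have hps_sum : (∑ m ∈ PS, ((DFinset m).card : ZMod 2)) = (PS.card : ZMod 2) := by
      rw [Finset.card_eq_sum_ones, Nat.cast_sum]
      apply Finset.sum_congr rfl
      intro m hm
      obtain ⟨hm1, hm2⟩ := hPS_mem m hm
      rw [odd_cast_zmod (DFinset_card_odd hm1 hm2)]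
      rfl
    rw [hc0, hps_sum, hPS_card]
    rw [Nat.cast_mul]
    rw [show ((2:ℕ) : ZMod 2) = 0 from rfl, zero_mul, add_zero]
  rw [hfirst] at htot2
  exact one_ne_zero htot2
end
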